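/- (Lemma 1) Let n ≥ 2 and let A, A' be symmetric matrices in {0,1}^{n×n} that are adjacent, i.e., there exist indices i ≠ j such that A and A' agree at every entry except (i,j) and (j,i), where A_{ij} = A_{ji} = 1 and A'_{ij} = A'_{ji} = 0. Suppose A and A' share principal bases: there exist orthogonal n×n matrices U, V and vectors s, s' ∈ ℝⁿ with A = U · diag(s) · V and A' = U · diag(s') · V. Then for every r with 1 ≤ r ≤ n, the truncated singular-value sensitivity satisfies √(Σ_{i=1}^r (s_i − s'_i)²) ≤ √2. -/
import Mathlib


open Matrix

/-- **Lemma 1.** For adjacent symmetric 0–1 matrices `A, A'` sharing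
principal bases `A = U * diagonal s * V`, `A' = U * diagonal s' * V` with `U, V`
orthogonal, the truncated singular-value sensitivity over the top `r` singular
values is at most `√2`, for every `1 ≤ r ≤ n`. -/
theorem truncated_singular_value_sensitivity (n : ℕ) (hn : 2 ≤ n)
    (A A' : Matrix (Fin n) (Fin n) ℝ)
    (hA01 : ∀ k l, A k l = 0 ∨ A k l = 1)
    (hA'01 : ∀ k l, A' k l = 0 ∨ A' k l = 1)
    (hAsymm : A.IsSymm) (hA'symm : A'.IsSymm)
    (i j : Fin n) (hij : i ≠ j)
    (hAij : A i j = 1) (hAji : A j i = 1)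
    (hA'ij : A' i j = 0) (hA'ji : A' j i = 0)
    (hagree : ∀ k l : Fin n, ¬(k = i ∧ l = j) → ¬(k = j ∧ l = i) → A k l = A' k l)
    (U V : Matrix (Fin n) (Fin n) ℝ) (s s' : Fin n → ℝ)
    (hU : Uᵀ * U = 1) (hU' : U * Uᵀ = 1)
    (hV : Vᵀ * V = 1) (hV' : V * Vᵀ = 1)
    (hA : A = U * Matrix.diagonal s * V)
    (hA' : A' = U * Matrix.diagonal s' * V) :
    ∀ r : ℕ, 1 ≤ r → r ≤ n →
      Real.sqrt (∑ i ∈ Finset.univ.filter (fun i : Fin n => (i : ℕ) < r),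
          (s i - s' i) ^ 2)
        ≤ Real.sqrt 2 := by
  intro r _ _
  set t : Fin n → ℝ := fun k => s k - s' k with ht
  set D : Matrix (Fin n) (Fin n) ℝ := A - A' with hDdef
  have h1 : D = U * Matrix.diagonal t * V := by
    rw [hDdef, hA, hA']
    rw [show Matrix.diagonal t = Matrix.diagonal s - Matrix.diagonal s' by
      ext a b; by_cases h : a = b <;> simp [Matrix.diagonal, h, ht]]
    rw [Matrix.mul_sub, Matrix.sub_mul]
  -- entries of D
  have hD : ∀ k l, D k l = if (k = i ∧ l = j) ∨ (k = j ∧ l = i) then 1 else 0 := by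
    intro k l
    by_cases h1' : k = i ∧ l = j
    · simp [hDdef, h1'.1, h1'.2, hAij, hA'ij]
    · by_cases h2' : k = j ∧ l = i
      · simp [hDdef, h2'.1, h2'.2, hAji, hA'ji, h1']
      · have := hagree k l h1' h2'
        simp [hDdef, this, h1', h2']
  -- Frobenius norm squared of D is 2
  have hsum2 : (∑ k, ∑ l, D k l * D k l) = 2 := by
    have : (∑ k, ∑ l, D k l * D k l)
        = ∑ p : Fin n × Fin n, D p.1 p.2 * D p.1 p.2 := by
      exact (Fintype.sum_prod_type (fun p : Fin n × Fin n => D p.1 p.2 * D p.1 p.2)).symm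
    rw [this]
    have hrw : ∀ p : Fin n × Fin n, D p.1 p.2 * D p.1 p.2
        = if p ∈ ({(i, j), (j, i)} : Finset (Fin n × Fin n)) then (1 : ℝ) else 0 := by
      intro p
      rw [hD]
      by_cases h : (p.1 = i ∧ p.2 = j) ∨ (p.1 = j ∧ p.2 = i)
      · have : p ∈ ({(i, j), (j, i)} : Finset (Fin n × Fin n)) := by
          rcases h with ⟨h1, h2⟩ | ⟨h1, h2⟩
          · simp [Prod.ext_iff, h1, h2]
          · simp [Prod.ext_iff, h1, h2]
        simp [h, this]
      · have : p ∉ ({(i, j), (j, i)} : Finset (Fin n × Fin n)) := by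
          simp only [Finset.mem_insert, Finset.mem_singleton, Prod.ext_iff]
          push_neg
          constructor
          · intro h1 h2; exact h (Or.inl ⟨h1, h2⟩)
          · intro h1 h2; exact h (Or.inr ⟨h1, h2⟩)
        simp [h, this]
    simp only [hrw]
    rw [Finset.sum_ite_mem, Finset.univ_inter, Finset.sum_const]
    have hcard : ({(i, j), (j, i)} : Finset (Fin n × Fin n)).card = 2 := by
      rw [Finset.card_insert_of_notMem (by simp [Prod.ext_iff, hij]), Finset.card_singleton]
    rw [hcard]; norm_num
  -- trace computation: Frobenius² of D equals ∑ t k ^ 2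
  have htr : (∑ k, ∑ l, D k l * D k l) = ∑ k, t k * t k := by
    have e1 : Dᵀ * D = Vᵀ * (Matrix.diagonal t * (Matrix.diagonal t * V)) := by
      rw [h1]
      simp only [Matrix.transpose_mul, Matrix.diagonal_transpose, Matrix.mul_assoc]
      rw [← Matrix.mul_assoc Uᵀ U, hU, Matrix.one_mul]
    have e2 : (Dᵀ * D).trace = ∑ k, t k * t k := by
      rw [e1, Matrix.trace_mul_comm, Matrix.mul_assoc, Matrix.mul_assoc, hV',
        Matrix.mul_one, Matrix.diagonal_mul_diagonal, Matrix.trace_diagonal]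
    rw [← e2]
    simp only [Matrix.trace, Matrix.diag, Matrix.mul_apply, Matrix.transpose_apply]
    rw [Finset.sum_comm]
  have hsumt : (∑ k, (s k - s' k) ^ 2) = 2 := by
    have : (∑ k, (s k - s' k) ^ 2) = ∑ k, t k * t k := by
      congr 1; ext k; rw [ht]; ring
    rw [this, ← htr, hsum2]
  apply Real.sqrt_le_sqrt
  calc (∑ i ∈ Finset.univ.filter (fun i : Fin n => (i : ℕ) < r), (s i - s' i) ^ 2)
      ≤ ∑ k, (s k - s' k) ^ 2 := by
        apply Finset.sum_le_sum_of_subset_of_nonneg (Finset.filter_subset _ _)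
        intro k _ _; positivity
    _ = 2 := hsumt
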